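/- Let Γ be a finite graph, Δ ⊆ Γ a full subgraph, v ∈ Γ a vertex, K ⊆ Γ ∖ st(v) a union of connected components of Γ ∖ st(v), and g = c_K^v the partial conjugation by v based at K. Then g preserves the special subgroup A_Δ (up to conjugacy in A_Γ) if and only if K ∩ Δ = ∅, or Δ ∖ st(v) ⊆ K, or v ∈ Δ; and g acts trivially on A_Δ (i.e. some representative of its outer class restricts to the identity on A_Δ) if and only if K ∩ Δ = ∅ or Δ ∖ st(v) ⊆ K. -/

import Mathlib

/-!
STATEMENT 8: A partial conjugation `g = c_K^v` of a RAAG `A_Γ` preserves the special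
subgroup `A_Δ` up to conjugacy iff `K ∩ Δ = ∅`, or `Δ ∖ st(v) ⊆ K`, or `v ∈ Δ`;
and it acts trivially on `A_Δ` iff `K ∩ Δ = ∅` or `Δ ∖ st(v) ⊆ K`.
-/

/-- The defining relators of the right-angled Artin group of a graph. -/
def raagRels {V : Type*} (Γ : SimpleGraph V) : Set (FreeGroup V) :=
  {r | ∃ u v : V, Γ.Adj u v ∧
    r = FreeGroup.of u * FreeGroup.of v * (FreeGroup.of u)⁻¹ * (FreeGroup.of v)⁻¹}

/-- The right-angled Artin group on a graph `Γ`. -/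
abbrev RAAG {V : Type*} (Γ : SimpleGraph V) : Type _ := PresentedGroup (raagRels Γ)

/-- The standard generator of `RAAG Γ` corresponding to a vertex. -/
def raagGen {V : Type*} (Γ : SimpleGraph V) (v : V) : RAAG Γ := PresentedGroup.of v

/-- The star of a vertex: the vertex together with its neighbours. -/
def graphStar {V : Type*} (Γ : SimpleGraph V) (v : V) : Set V :=
  insert v (Γ.neighborSet v)

/-- The connected component (as a set of vertices of `V`) of the vertex `u` in the induced
subgraph of `Γ` on the set `s`. -/
def compIn {V : Type*} (Γ : SimpleGraph V) (s : Set V) (u : V) : Set V :=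
  {x | ∃ (hu : u ∈ s) (hx : x ∈ s), (Γ.induce s).Reachable ⟨u, hu⟩ ⟨x, hx⟩}

/-- `A` is a union of connected components of `Γ ∖ st(v)`. -/
def IsUnionOfComponents {V : Type*} (Γ : SimpleGraph V) (v : V) (A : Set V) : Prop :=
  A ⊆ (graphStar Γ v)ᶜ ∧ ∀ u ∈ A, compIn Γ (graphStar Γ v)ᶜ u ⊆ A

open Classical in
/-- `φ` is the partial conjugation by the vertex `v` based at the set `A`: it sends each
standard generator `u ∈ A` to `v⁻¹ u v` and fixes all other standard generators. -/
noncomputable def IsPartialConj {V : Type*} (Γ : SimpleGraph V)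
    (φ : MulAut (RAAG Γ)) (v : V) (A : Set V) : Prop :=
  ∀ u : V, φ (raagGen Γ u) =
    if u ∈ A then (raagGen Γ v)⁻¹ * raagGen Γ u * raagGen Γ v else raagGen Γ u

/-- The special subgroup of the RAAG generated by the vertices of `Δ`. -/
def specialSubgroup {V : Type*} (Γ : SimpleGraph V) (Δ : Set V) : Subgroup (RAAG Γ) :=
  Subgroup.closure (raagGen Γ '' Δ)

/-- `φ` preserves the subgroup `S` up to conjugacy: some representative of the outer
class of `φ` maps `S` onto `S`. -/
def PreservesSubgroup {V : Type*} (Γ : SimpleGraph V) (φ : MulAut (RAAG Γ))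
    (S : Subgroup (RAAG Γ)) : Prop :=
  ∃ x : RAAG Γ, S.map ((MulAut.conj x * φ : MulAut (RAAG Γ)) : RAAG Γ →* RAAG Γ) = S

/-- `φ` acts trivially on the subgroup `S`: some representative of the outer class of `φ`
restricts to the identity on `S`. -/
def ActsTriviallyOn {V : Type*} (Γ : SimpleGraph V) (φ : MulAut (RAAG Γ))
    (S : Subgroup (RAAG Γ)) : Prop :=
  ∃ x : RAAG Γ, ∀ a ∈ S, x * φ a * x⁻¹ = a

-- commute of adjacent generators
theorem raag_commute {V : Type*} {Γ : SimpleGraph V} {p q : V} (h : Γ.Adj p q) :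
    Commute (raagGen Γ p) (raagGen Γ q) := by
  have hmem : FreeGroup.of p * FreeGroup.of q * (FreeGroup.of p)⁻¹ * (FreeGroup.of q)⁻¹
      ∈ Subgroup.normalClosure (raagRels Γ) :=
    Subgroup.subset_normalClosure ⟨p, q, h, rfl⟩
  have h1 : raagGen Γ p * raagGen Γ q * (raagGen Γ p)⁻¹ * (raagGen Γ q)⁻¹ = 1 :=
    (QuotientGroup.eq_one_iff _).mpr hmem
  have h2 : raagGen Γ p * raagGen Γ q * (raagGen Γ p)⁻¹ = raagGen Γ q :=
    mul_inv_eq_one.mp h1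
  have h3 := congrArg (· * raagGen Γ p) h2
  exact (by simpa [mul_assoc] using h3 : raagGen Γ p * raagGen Γ q = raagGen Γ q * raagGen Γ p)

-- the detecting homomorphism
theorem exists_detHom {V : Type*} (Γ : SimpleGraph V) (v : V) {u b : V}
    (hu : u ∉ graphStar Γ v) (hb : b ∉ graphStar Γ v) :
    ∃ f : RAAG Γ →* Equiv.Perm (Fin 3),
      f (raagGen Γ u) = Equiv.swap 0 1 ∧ f (raagGen Γ b) = Equiv.swap 0 1 ∧
      f (raagGen Γ v) = Equiv.swap 0 2 ∧
      ∀ w : V, w ≠ v → f (raagGen Γ w) = 1 ∨ f (raagGen Γ w) = Equiv.swap 0 1 := by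
  classical
  have huv : u ≠ v := fun h => hu (by rw [h]; exact Set.mem_insert v _)
  have hbv : b ≠ v := fun h => hb (by rw [h]; exact Set.mem_insert v _)
  set σ : Equiv.Perm (Fin 3) := Equiv.swap 0 1 with hσ
  set τ : Equiv.Perm (Fin 3) := Equiv.swap 0 2 with hτ
  set h : V → Equiv.Perm (Fin 3) :=
    fun w => if w = v then τ else if w = u ∨ w = b then σ else 1 with hh
  have hone : ∀ w : V, w ∈ graphStar Γ v → w ≠ v → h w = 1 := by
    intro w hw hwv
    have hwu : w ≠ u := fun e => hu (e ▸ hw)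
    have hwb : w ≠ b := fun e => hb (e ▸ hw)
    simp [hh, hwv, hwu, hwb]
  have hcases : ∀ w : V, w ≠ v → h w = 1 ∨ h w = σ := by
    intro w hwv
    simp only [hh, if_neg hwv]
    split <;> simp
  have key : ∀ r ∈ raagRels Γ, FreeGroup.lift h r = 1 := by
    rintro r ⟨p, q, hpq, rfl⟩
    have hcomm : Commute (h p) (h q) := by
      by_cases hp : p = v
      · subst hp
        have : h q = 1 := hone q (Set.mem_insert_of_mem _ hpq) hpq.ne'
        rw [this]; exact Commute.one_right _
      · by_cases hq : q = v
        · subst hq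
          have : h p = 1 := hone p (Set.mem_insert_of_mem _ hpq.symm) hpq.ne
          rw [this]; exact Commute.one_left _
        · rcases hcases p hp with e | e <;> rcases hcases q hq with e' | e' <;>
            rw [e, e'] <;>
            first | exact Commute.one_left _ | exact Commute.one_right _
    have : FreeGroup.lift h (FreeGroup.of p * FreeGroup.of q * (FreeGroup.of p)⁻¹ *
        (FreeGroup.of q)⁻¹) = h p * h q * (h p)⁻¹ * (h q)⁻¹ := by
      simp [map_mul, map_inv]
    rw [this]
    have : h p * h q * (h p)⁻¹ * (h q)⁻¹ = 1 := by rw [hcomm.eq, mul_inv_cancel_right, mul_inv_cancel]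
    simpa [commutatorElement_def] using this
  refine ⟨PresentedGroup.toGroup key, ?_, ?_, ?_, ?_⟩
  · show PresentedGroup.toGroup key (PresentedGroup.of u) = σ
    rw [PresentedGroup.toGroup.of]
    simp [hh, huv]
  · show PresentedGroup.toGroup key (PresentedGroup.of b) = σ
    rw [PresentedGroup.toGroup.of]
    simp [hh, hbv]
  · show PresentedGroup.toGroup key (PresentedGroup.of v) = τ
    rw [PresentedGroup.toGroup.of]
    simp [hh]
  · intro w hwv
    show PresentedGroup.toGroup key (PresentedGroup.of w) = 1 ∨
      PresentedGroup.toGroup key (PresentedGroup.of w) = σ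
    rw [PresentedGroup.toGroup.of]
    exact hcases w hwv

theorem mem_zpowers_swap {z : Equiv.Perm (Fin 3)}
    (h : z ∈ Subgroup.zpowers (Equiv.swap 0 1 : Equiv.Perm (Fin 3))) :
    z = 1 ∨ z = Equiv.swap 0 1 := by
  obtain ⟨k, rfl⟩ := h
  set σ : Equiv.Perm (Fin 3) := Equiv.swap 0 1 with hσ
  have h2 : σ ^ (2:ℤ) = 1 := by rw [zpow_two]; decide
  rcases Int.even_or_odd k with ⟨m, rfl⟩ | ⟨m, rfl⟩
  · left
    show σ ^ (m + m) = 1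
    rw [← two_mul, zpow_mul, h2, one_zpow]
  · right
    show σ ^ (2 * m + 1) = σ
    rw [zpow_add, zpow_mul, h2, one_zpow, zpow_one, one_mul]

theorem perm_dec : ∀ y : Equiv.Perm (Fin 3),
    y * Equiv.swap 0 1 * y⁻¹ = Equiv.swap 0 1 →
    y * ((Equiv.swap 0 2)⁻¹ * Equiv.swap 0 1 * Equiv.swap 0 2) * y⁻¹ = Equiv.swap 0 1 →
    False := by decide

theorem partialConj_preserves_special_iff {V : Type*} [Fintype V] (Γ : SimpleGraph V)
    (Δ : Set V) (v : V) (K : Set V) (hK : IsUnionOfComponents Γ v K)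
    (g : MulAut (RAAG Γ)) (hg : IsPartialConj Γ g v K) :
    (PreservesSubgroup Γ g (specialSubgroup Γ Δ) ↔
      K ∩ Δ = ∅ ∨ Δ \ graphStar Γ v ⊆ K ∨ v ∈ Δ) ∧
    (ActsTriviallyOn Γ g (specialSubgroup Γ Δ) ↔
      K ∩ Δ = ∅ ∨ Δ \ graphStar Γ v ⊆ K) := by
  classical
  have hψ : ∀ (x : RAAG Γ) (a : RAAG Γ),
      ((MulAut.conj x * g : MulAut (RAAG Γ)) : RAAG Γ →* RAAG Γ) a = x * g a * x⁻¹ :=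
    fun x a => rfl
  have hvK : v ∉ K := fun h => hK.1 h (Set.mem_insert v _)
  have hgv : g (raagGen Γ v) = raagGen Γ v := by rw [hg v, if_neg hvK]
  have hgenS : ∀ w ∈ Δ, raagGen Γ w ∈ specialSubgroup Γ Δ := fun w hw =>
    Subgroup.subset_closure ⟨w, hw, rfl⟩
  have hATgen : ∀ x : RAAG Γ, (∀ w ∈ Δ, x * g (raagGen Γ w) * x⁻¹ = raagGen Γ w) →
      ActsTriviallyOn Γ g (specialSubgroup Γ Δ) := by
    intro x hx
    refine ⟨x, fun a ha => ?_⟩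
    have hle : specialSubgroup Γ Δ ≤
        MonoidHom.eqLocus ((MulAut.conj x * g : MulAut (RAAG Γ)) : RAAG Γ →* RAAG Γ)
          (MonoidHom.id _) := by
      unfold specialSubgroup
      apply (Subgroup.closure_le _).mpr
      rintro _ ⟨w, hw, rfl⟩
      show ((MulAut.conj x * g : MulAut (RAAG Γ)) : RAAG Γ →* RAAG Γ) (raagGen Γ w) =
        MonoidHom.id _ (raagGen Γ w)
      rw [hψ]
      exact hx w hw
    have h1 : ((MulAut.conj x * g : MulAut (RAAG Γ)) : RAAG Γ →* RAAG Γ) a =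
        MonoidHom.id _ a := hle ha
    rw [hψ] at h1
    exact h1
  have hA : K ∩ Δ = ∅ → ActsTriviallyOn Γ g (specialSubgroup Γ Δ) := by
    intro hKD
    apply hATgen 1
    intro w hw
    have hwK : w ∉ K := fun h => (Set.eq_empty_iff_forall_notMem.mp hKD w) ⟨h, hw⟩
    rw [hg w, if_neg hwK]
    group
  have hB : Δ \ graphStar Γ v ⊆ K → ActsTriviallyOn Γ g (specialSubgroup Γ Δ) := by
    intro hsub
    apply hATgen (raagGen Γ v)
    intro w hw
    by_cases hwK : w ∈ K
    · rw [hg w, if_pos hwK]; group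
    · rw [hg w, if_neg hwK]
      have hwst : w ∈ graphStar Γ v := by
        by_contra hst
        exact hwK (hsub ⟨hw, hst⟩)
      rcases Set.mem_insert_iff.mp hwst with rfl | hadj
      · rw [mul_inv_cancel_right]
      · have hc : Commute (raagGen Γ v) (raagGen Γ w) := raag_commute hadj
        rw [hc.eq, mul_inv_cancel_right]
  have hATP : ActsTriviallyOn Γ g (specialSubgroup Γ Δ) →
      PreservesSubgroup Γ g (specialSubgroup Γ Δ) := by
    rintro ⟨x, hx⟩
    refine ⟨x, le_antisymm ?_ ?_⟩
    · rintro _ ⟨a, ha, rfl⟩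
      rw [hψ, hx a ha]
      exact ha
    · intro a ha
      exact ⟨a, ha, by rw [hψ, hx a ha]⟩
  have hC : v ∈ Δ → PreservesSubgroup Γ g (specialSubgroup Γ Δ) := by
    intro hvΔ
    refine ⟨1, le_antisymm ?_ ?_⟩
    · rw [Subgroup.map_le_iff_le_comap]
      conv_lhs => unfold specialSubgroup
      apply (Subgroup.closure_le _).mpr
      rintro _ ⟨w, hw, rfl⟩
      rw [SetLike.mem_coe, Subgroup.mem_comap, hψ, hg w]
      have h1 : ∀ z : RAAG Γ, (1 : RAAG Γ) * z * (1 : RAAG Γ)⁻¹ = z := by intro z; group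
      rw [h1]
      split_ifs with hwK
      · exact Subgroup.mul_mem _ (Subgroup.mul_mem _
          (Subgroup.inv_mem _ (hgenS v hvΔ)) (hgenS w hw)) (hgenS v hvΔ)
      · exact hgenS w hw
    · conv_lhs => unfold specialSubgroup
      apply (Subgroup.closure_le _).mpr
      rintro _ ⟨w, hw, rfl⟩
      by_cases hwK : w ∈ K
      · refine ⟨raagGen Γ v * raagGen Γ w * (raagGen Γ v)⁻¹,
          Subgroup.mul_mem _ (Subgroup.mul_mem _ (hgenS v hvΔ) (hgenS w hw))
            (Subgroup.inv_mem _ (hgenS v hvΔ)), ?_⟩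
        rw [hψ, map_mul, map_mul, map_inv, hgv, hg w, if_pos hwK]
        group
      · exact ⟨raagGen Γ w, hgenS w hw, by rw [hψ, hg w, if_neg hwK]; group⟩
  have hOT : ActsTriviallyOn Γ g (specialSubgroup Γ Δ) →
      (K ∩ Δ = ∅ ∨ Δ \ graphStar Γ v ⊆ K) := by
    rintro ⟨x, hx⟩
    by_contra hcon
    push_neg at hcon
    obtain ⟨hne, hnsub⟩ := hcon
    obtain ⟨u, huK, huΔ⟩ := hne
    obtain ⟨b, ⟨hbΔ, hbst⟩, hbK⟩ := Set.not_subset.mp hnsub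
    have hust : u ∉ graphStar Γ v := hK.1 huK
    obtain ⟨f, hfu, hfb, hfv, _⟩ := exists_detHom Γ v hust hbst
    have e1 := hx _ (hgenS b hbΔ)
    have e2 := hx _ (hgenS u huΔ)
    rw [hg b, if_neg hbK] at e1
    rw [hg u, if_pos huK] at e2
    have f1 := congrArg f e1
    have f2 := congrArg f e2
    simp only [map_mul, map_inv, hfu, hfb, hfv] at f1 f2
    exact perm_dec (f x) f1 f2
  have hOP : PreservesSubgroup Γ g (specialSubgroup Γ Δ) →
      (K ∩ Δ = ∅ ∨ Δ \ graphStar Γ v ⊆ K ∨ v ∈ Δ) := by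
    rintro ⟨x, hx⟩
    by_contra hcon
    push_neg at hcon
    obtain ⟨hne, hnsub, hvΔ⟩ := hcon
    obtain ⟨u, huK, huΔ⟩ := hne
    obtain ⟨b, ⟨hbΔ, hbst⟩, hbK⟩ := Set.not_subset.mp hnsub
    have hust : u ∉ graphStar Γ v := hK.1 huK
    obtain ⟨f, hfu, hfb, hfv, hfw⟩ := exists_detHom Γ v hust hbst
    have hSz : ∀ a ∈ specialSubgroup Γ Δ,
        f a ∈ Subgroup.zpowers (Equiv.swap 0 1 : Equiv.Perm (Fin 3)) := by
      intro a ha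
      have hle : specialSubgroup Γ Δ ≤
          Subgroup.comap f (Subgroup.zpowers (Equiv.swap 0 1 : Equiv.Perm (Fin 3))) := by
        conv_lhs => unfold specialSubgroup
        apply (Subgroup.closure_le _).mpr
        rintro _ ⟨w, hw, rfl⟩
        rw [SetLike.mem_coe, Subgroup.mem_comap]
        rcases hfw w (fun e => hvΔ (e ▸ hw)) with e | e
        · rw [e]; exact Subgroup.one_mem _
        · rw [e]; exact Subgroup.mem_zpowers _
      exact hle ha
    have mb : ((MulAut.conj x * g : MulAut (RAAG Γ)) : RAAG Γ →* RAAG Γ) (raagGen Γ b)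
        ∈ specialSubgroup Γ Δ := by
      rw [← hx]; exact Subgroup.mem_map_of_mem _ (hgenS b hbΔ)
    have mu : ((MulAut.conj x * g : MulAut (RAAG Γ)) : RAAG Γ →* RAAG Γ) (raagGen Γ u)
        ∈ specialSubgroup Γ Δ := by
      rw [← hx]; exact Subgroup.mem_map_of_mem _ (hgenS u huΔ)
    have fb' := hSz _ mb
    have fu' := hSz _ mu
    rw [hψ, hg b, if_neg hbK] at fb'
    rw [hψ, hg u, if_pos huK] at fu'
    simp only [map_mul, map_inv, hfu, hfb, hfv] at fb' fu'
    rcases mem_zpowers_swap fb' with e | e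
    · have h1 : (Equiv.swap 0 1 : Equiv.Perm (Fin 3)) = 1 := by
        have h2 := congrArg (fun z => (f x)⁻¹ * z * f x) e
        simpa [mul_assoc] using h2
      exact absurd h1 (by decide)
    · rcases mem_zpowers_swap fu' with e' | e'
      · have h1 : ((Equiv.swap 0 2)⁻¹ * Equiv.swap 0 1 * Equiv.swap 0 2 :
            Equiv.Perm (Fin 3)) = 1 := by
          have h2 := congrArg (fun z => (f x)⁻¹ * z * f x) e'
          simpa [mul_assoc] using h2
        exact absurd h1 (by decide)
      · exact perm_dec (f x) e e'
  refine ⟨⟨hOP, fun h => ?_⟩, ⟨hOT, fun h => h.elim hA hB⟩⟩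
  rcases h with h | h | h
  · exact hATP (hA h)
  · exact hATP (hB h)
  · exact hC h
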